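/- For all real numbers s, t and p ≥ 1, one has (|s|^{p-1}s - |t|^{p-1}t)(s - t) ≥ 2^{1-p} |s - t|^{p+1}. -/
import Mathlib


open Real

private lemma super_add (p : ℝ) (hp : 1 ≤ p) {x y : ℝ} (hx : 0 ≤ x) (hy : 0 ≤ y) :
    x ^ p + y ^ p ≤ (x + y) ^ p := by
  lift x to NNReal using hx
  lift y to NNReal using hy
  have := NNReal.add_rpow_le_rpow_add x y hp
  have h2 : ((x ^ p + y ^ p : NNReal) : ℝ) ≤ (((x + y) ^ p : NNReal) : ℝ) := by
    exact_mod_cast this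
  push_cast at h2
  exact h2

private lemma pow_mean (p : ℝ) (hp : 1 ≤ p) {x y : ℝ} (hx : 0 ≤ x) (hy : 0 ≤ y) :
    (2:ℝ) ^ (1 - p) * (x + y) ^ p ≤ x ^ p + y ^ p := by
  lift x to NNReal using hx
  lift y to NNReal using hy
  have := NNReal.rpow_add_le_mul_rpow_add_rpow x y hp
  have h2 : (((x + y) ^ p : NNReal) : ℝ) ≤ (((2:NNReal) ^ (p - 1) * (x ^ p + y ^ p) : NNReal) : ℝ) := by
    exact_mod_cast this
  push_cast at h2
  have h3 : (0:ℝ) < (2:ℝ) ^ (1 - p) := Real.rpow_pos_of_pos (by norm_num) _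
  have h4 : (2:ℝ) ^ (1 - p) * (2:ℝ) ^ (p - 1) = 1 := by
    rw [← Real.rpow_add (by norm_num)]; norm_num
  calc (2:ℝ) ^ (1 - p) * ((x:ℝ) + y) ^ p
      ≤ (2:ℝ) ^ (1 - p) * ((2:ℝ) ^ (p - 1) * ((x:ℝ) ^ p + (y:ℝ) ^ p)) := by
        exact mul_le_mul_of_nonneg_left h2 h3.le
    _ = ((x:ℝ) ^ p + (y:ℝ) ^ p) := by rw [← mul_assoc, h4, one_mul]

private lemma g_eq (p : ℝ) (hp : 1 ≤ p) {s : ℝ} (hs : 0 ≤ s) :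
    |s| ^ (p - 1) * s = s ^ p := by
  rcases eq_or_lt_of_le hs with rfl | hs'
  · simp [Real.zero_rpow (by linarith : p ≠ 0)]
  · rw [abs_of_pos hs', ← Real.rpow_add_one hs'.ne']
    ring_nf

private lemma key (p : ℝ) (hp : 1 ≤ p) {s t : ℝ} (hts : t ≤ s) :
    (2:ℝ) ^ (1 - p) * (s - t) ^ p ≤ |s| ^ (p - 1) * s - |t| ^ (p - 1) * t := by
  have h21 : (2:ℝ) ^ (1 - p) ≤ 1 := by
    calc (2:ℝ) ^ (1 - p) ≤ (2:ℝ) ^ (0:ℝ) :=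
          Real.rpow_le_rpow_of_exponent_le (by norm_num) (by linarith)
      _ = 1 := Real.rpow_zero 2
  rcases le_or_gt 0 t with ht | ht
  · -- 0 ≤ t ≤ s
    have hs : 0 ≤ s := ht.trans hts
    rw [g_eq p hp hs, g_eq p hp ht]
    have h1 := super_add p hp (by linarith : (0:ℝ) ≤ s - t) ht
    have h2 : (s - t) ^ p ≤ s ^ p - t ^ p := by
      have : s - t + t = s := by ring
      rw [this] at h1; linarith
    have hst : (0:ℝ) ≤ (s - t) ^ p := Real.rpow_nonneg (by linarith) _
    nlinarith [mul_le_mul_of_nonneg_right h21 hst]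
  rcases le_or_gt s 0 with hs | hs
  · -- t < s ≤ 0
    have h1 : |s| ^ (p - 1) * s = -((-s) ^ p) := by
      have := g_eq p hp (by linarith : (0:ℝ) ≤ -s)
      rw [abs_neg] at this; nlinarith [this]
    have h2 : |t| ^ (p - 1) * t = -((-t) ^ p) := by
      have := g_eq p hp (by linarith : (0:ℝ) ≤ -t)
      rw [abs_neg] at this; nlinarith [this]
    rw [h1, h2]
    have h3 := super_add p hp (by linarith : (0:ℝ) ≤ s - t) (by linarith : (0:ℝ) ≤ -s)
    have he : s - t + -s = -t := by ring
    rw [he] at h3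
    have hst : (0:ℝ) ≤ (s - t) ^ p := Real.rpow_nonneg (by linarith) _
    nlinarith [mul_le_mul_of_nonneg_right h21 hst]
  · -- t < 0 < s
    rw [g_eq p hp hs.le]
    have h2 : |t| ^ (p - 1) * t = -((-t) ^ p) := by
      have := g_eq p hp (by linarith : (0:ℝ) ≤ -t)
      rw [abs_neg] at this; nlinarith [this]
    rw [h2]
    have h3 := pow_mean p hp hs.le (by linarith : (0:ℝ) ≤ -t)
    have he : s + -t = s - t := by ring
    rw [he] at h3
    linarith

/-- For all reals `s, t` and `p ≥ 1`:
`(|s|^{p-1}s - |t|^{p-1}t)(s - t) ≥ 2^{1-p} |s-t|^{p+1}`. -/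
theorem stmt6 (p : ℝ) (hp : 1 ≤ p) (s t : ℝ) :
    (2:ℝ) ^ (1 - p) * |s - t| ^ (p + 1) ≤
      (|s| ^ (p - 1) * s - |t| ^ (p - 1) * t) * (s - t) := by
  wlog hts : t ≤ s with H
  · have h := H p hp t s (le_of_lt (not_le.mp hts))
    have h1 : |t - s| = |s - t| := abs_sub_comm t s
    rw [h1] at h
    calc (2:ℝ) ^ (1 - p) * |s - t| ^ (p + 1)
        ≤ (|t| ^ (p - 1) * t - |s| ^ (p - 1) * s) * (t - s) := h
      _ = (|s| ^ (p - 1) * s - |t| ^ (p - 1) * t) * (s - t) := by ring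
  have hd : 0 ≤ s - t := by linarith
  rw [abs_of_nonneg hd, Real.rpow_add_one' hd (by linarith : p + 1 ≠ 0)]
  have hk := key p hp hts
  calc (2:ℝ) ^ (1 - p) * ((s - t) ^ p * (s - t))
      = (2:ℝ) ^ (1 - p) * (s - t) ^ p * (s - t) := by ring
    _ ≤ (|s| ^ (p - 1) * s - |t| ^ (p - 1) * t) * (s - t) :=
        mul_le_mul_of_nonneg_right hk hd
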